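/- Consider the nonredundant nested array, i.e., the generalized nested array with Δ = N_rx, with pairwise distinct grid angles θ_1, …, θ_V ∈ [−π/2, π/2) and V ≥ N_tx·N_rx. Then for every waveform matrix S ∈ ℂ^{T×N_tx} with full column rank, rank(S) = N_tx, the sensing matrix B = (S·A_tx) ⊙ A_rx satisfies krank(B) = N_tx·N_rx. -/

import Mathlib

/-- The Kruskal rank of a complex matrix `M`: the largest integer `r` such that
every set of `r` columns of `M` is linearly independent. -/
noncomputable def krank {m n : Type*} [Fintype m] [Fintype n] (M : Matrix m n ℂ) : ℕ :=
  sSup {r : ℕ | r ≤ Fintype.card n ∧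
    ∀ s : Finset n, s.card = r → LinearIndependent ℂ (fun j : s => M.transpose (j : n))}

/-- The Khatri-Rao (columnwise Kronecker) product. -/
def khatriRao {p q V : Type*} (A : Matrix p V ℂ) (B : Matrix q V ℂ) :
    Matrix (p × q) V ℂ :=
  Matrix.of fun nm i => A nm.1 i * B nm.2 i

/-- Injectivity of the steering nodes. -/
lemma z_injective_aux {V : ℕ} (θ : Fin V → ℝ) (hθinj : Function.Injective θ)
    (hθrange : ∀ i, θ i ∈ Set.Ico (-(Real.pi / 2)) (Real.pi / 2)) :
    Function.Injective (fun i => Complex.exp (Complex.I * Real.pi * Real.sin (θ i))) := by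
  have hπ := Real.pi_pos
  have hsin : ∀ i : Fin V, Real.sin (θ i) ∈ Set.Ico (-1 : ℝ) 1 := by
    intro i
    obtain ⟨h1, h2⟩ := hθrange i
    constructor
    · have := Real.neg_one_le_sin (θ i); linarith
    · have := Real.strictMonoOn_sin (a := θ i) (b := Real.pi / 2)
        ⟨h1, le_of_lt h2⟩ ⟨by linarith, le_refl _⟩ h2
      simpa [Real.sin_pi_div_two] using this
  intro i j hij
  simp only at hij
  rw [Complex.exp_eq_exp_iff_exists_int] at hij
  obtain ⟨n, hn⟩ := hij
  have hn' : Complex.I * ((Real.pi * Real.sin (θ i) : ℝ) : ℂ) =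
      Complex.I * ((Real.pi * Real.sin (θ j) + n * (2 * Real.pi) : ℝ) : ℂ) := by
    push_cast
    push_cast at hn
    linear_combination hn
  have hr : Real.pi * Real.sin (θ i) = Real.pi * Real.sin (θ j) + n * (2 * Real.pi) := by
    have := mul_left_cancel₀ Complex.I_ne_zero hn'
    exact_mod_cast this
  obtain ⟨hi1, hi2⟩ := hsin i
  obtain ⟨hj1, hj2⟩ := hsin j
  have hn0 : n = 0 := by
    have h1 : (n : ℝ) * (2 * Real.pi) < 2 * Real.pi := by nlinarith
    have h2 : -(2 * Real.pi) < (n : ℝ) * (2 * Real.pi) := by nlinarith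
    have hlt : (n : ℝ) < 1 := by nlinarith
    have hgt : (-1 : ℝ) < (n : ℝ) := by nlinarith
    have : n < 1 := by exact_mod_cast hlt
    have : (-1 : ℤ) < n := by exact_mod_cast hgt
    omega
  rw [hn0] at hr
  simp at hr
  have hsineq : Real.sin (θ i) = Real.sin (θ j) := by
    exact hr
  have : θ i = θ j := by
    apply Real.injOn_sin _ _ hsineq
    · obtain ⟨h1, h2⟩ := hθrange i; exact ⟨h1, le_of_lt h2⟩
    · obtain ⟨h1, h2⟩ := hθrange j; exact ⟨h1, le_of_lt h2⟩
  exact hθinj this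

/-- Vandermonde columns with distinct nodes are linearly independent. -/
lemma vand_li {V K : ℕ} (z : Fin V → ℂ) (hz : Function.Injective z)
    (s : Finset (Fin V)) (hs : s.card = K) :
    LinearIndependent ℂ (fun j : s => fun a : Fin K => z (j : Fin V) ^ (a : ℕ)) := by
  have e : Fin K ≃ s := (s.equivFinOfCardEq hs).symm
  rw [← linearIndependent_equiv e]
  have heq : ((fun j : s => fun a : Fin K => z (j : Fin V) ^ (a : ℕ)) ∘ e) =
      fun b => (Matrix.vandermonde fun b : Fin K => z ((e b : Fin V))) b := by
    ext b a
    simp [Matrix.vandermonde]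
  rw [heq]
  refine Matrix.linearIndependent_rows_iff_isUnit.mpr ?_
  rw [Matrix.isUnit_iff_isUnit_det]
  apply Ne.isUnit
  refine Matrix.det_vandermonde_ne_zero_iff.mpr ?_
  intro a b hab
  apply e.injective
  apply Subtype.ext
  exact hz hab

/-- for the nonredundant nested array (GNA with `Δ = N_rx`) and any
full-column-rank waveform matrix `S` (`rank S = N_tx`), the sensing matrix achieves
`krank B = N_tx·N_rx`. -/
theorem stmt_16 (Ntx Nrx V : ℕ)
    (hNtx : 0 < Ntx) (hNrx : 0 < Nrx)
    (dtx : Fin Ntx → ℤ) (hdtx : ∀ n, dtx n = (n : ℤ) * Nrx)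
    (drx : Fin Nrx → ℤ) (hdrx : ∀ m, drx m = (m : ℤ))
    (θ : Fin V → ℝ) (hθinj : Function.Injective θ)
    (hθrange : ∀ i, θ i ∈ Set.Ico (-(Real.pi / 2)) (Real.pi / 2))
    (hV : Ntx * Nrx ≤ V)
    (Atx : Matrix (Fin Ntx) (Fin V) ℂ)
    (hAtx : ∀ n i, Atx n i =
      Complex.exp (Complex.I * Real.pi * (dtx n : ℂ) * (Real.sin (θ i) : ℂ)))
    (Arx : Matrix (Fin Nrx) (Fin V) ℂ)
    (hArx : ∀ m i, Arx m i =
      Complex.exp (Complex.I * Real.pi * (drx m : ℂ) * (Real.sin (θ i) : ℂ))) :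
    ∀ (T : ℕ) (S : Matrix (Fin T) (Fin Ntx) ℂ), S.rank = Ntx →
      krank (khatriRao (S * Atx) Arx) = Ntx * Nrx := by
  intro T S hS
  classical
  set z : Fin V → ℂ := fun i => Complex.exp (Complex.I * Real.pi * Real.sin (θ i)) with hzdef
  have hz : Function.Injective z := z_injective_aux θ hθinj hθrange
  -- the virtual-array manifold matrix
  set M : Matrix (Fin Ntx × Fin Nrx) (Fin V) ℂ :=
    Matrix.of (fun nm i => z i ^ ((finProdFinEquiv nm : Fin (Ntx * Nrx)) : ℕ)) with hMdef
  -- the mixing matrix S ⊗ I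
  set L : Matrix (Fin T × Fin Nrx) (Fin Ntx × Fin Nrx) ℂ :=
    Matrix.of (fun tm nm => S tm.1 nm.1 * (if tm.2 = nm.2 then 1 else 0)) with hLdef
  -- entrywise formula for columns of the KR product of manifolds
  have hM_entry : ∀ (n : Fin Ntx) (m : Fin Nrx) (i : Fin V),
      Atx n i * Arx m i = M (n, m) i := by
    intro n m i
    have h1 : Atx n i = z i ^ ((n : ℕ) * Nrx) := by
      rw [hAtx, hdtx, hzdef]
      rw [← Complex.exp_nat_mul]
      congr 1
      push_cast
      ring
    have h2 : Arx m i = z i ^ (m : ℕ) := by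
      rw [hArx, hdrx, hzdef]
      rw [← Complex.exp_nat_mul]
      congr 1
      push_cast
      ring
    rw [h1, h2, ← pow_add, hMdef]
    simp only [Matrix.of_apply, finProdFinEquiv_apply_val]
    congr 1
    ring
  -- the factorization B = L * M
  have hB : khatriRao (S * Atx) Arx = L * M := by
    ext ⟨t, m⟩ i
    simp only [khatriRao, Matrix.of_apply, Matrix.mul_apply, hLdef, Fintype.sum_prod_type]
    simp only [Matrix.of_apply, ite_mul, one_mul, zero_mul, mul_ite, mul_zero]
    rw [Finset.sum_comm]
    rw [Finset.sum_eq_single m (by intro b _ hb; simp [Ne.symm hb]) (by simp)]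
    simp only [if_true, mul_one, eq_self_iff_true]
    rw [Finset.sum_mul]
    apply Finset.sum_congr rfl
    intro n _
    rw [mul_assoc, hM_entry]
  -- S has injective mulVec
  have hSinj : Function.Injective S.mulVecLin := by
    rw [← LinearMap.ker_eq_bot]
    have hrn := LinearMap.finrank_range_add_finrank_ker S.mulVecLin
    rw [Module.finrank_fintype_fun_eq_card, Fintype.card_fin] at hrn
    have hr : Module.finrank ℂ (LinearMap.range S.mulVecLin) = Ntx := hS
    rw [hr] at hrn
    have : Module.finrank ℂ (LinearMap.ker S.mulVecLin) = 0 := by omega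
    exact Submodule.finrank_eq_zero.mp this
  -- L has injective mulVec
  have hLinj : Function.Injective L.mulVecLin := by
    rw [← LinearMap.ker_eq_bot, LinearMap.ker_eq_bot']
    intro v hv
    have hv' : ∀ tm : Fin T × Fin Nrx, (L.mulVec v) tm = 0 := by
      rw [show L.mulVec v = L.mulVecLin v from rfl, hv]; simp
    funext ⟨n, m⟩
    have hm : (fun n' => v (n', m)) = 0 := by
      apply hSinj
      simp only [map_zero]
      funext t
      have := hv' (t, m)
      simp only [Matrix.mulVec, dotProduct, hLdef, Matrix.of_apply,
        Fintype.sum_prod_type] at this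
      rw [Finset.sum_comm] at this
      rw [Finset.sum_eq_single m (by intro b _ hb; simp [Ne.symm hb]) (by simp)] at this
      simp only [if_pos rfl, one_mul] at this
      simpa [Matrix.mulVecLin_apply, Matrix.mulVec, dotProduct] using this
    have := congrFun hm n
    simpa using this
  -- columns of B are L applied to columns of M
  have hcol : ∀ i : Fin V, (khatriRao (S * Atx) Arx).transpose i = L.mulVecLin (M.transpose i) := by
    intro i
    funext tm
    rw [hB]
    simp [Matrix.mulVecLin_apply, Matrix.mulVec, dotProduct, Matrix.mul_apply,
      Matrix.transpose_apply]
  -- columns of M over any set of size Ntx*Nrx are linearly independent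
  have hMli : ∀ s : Finset (Fin V), s.card = Ntx * Nrx →
      LinearIndependent ℂ (fun j : s => M.transpose (j : Fin V)) := by
    intro s hs
    have hli := vand_li z hz s hs
    have := hli.map' (LinearEquiv.funCongrLeft ℂ ℂ finProdFinEquiv).toLinearMap
      (LinearEquiv.funCongrLeft ℂ ℂ finProdFinEquiv).ker
    convert this using 1
    all_goals rfl
  -- linear independence of B's columns over any set of size Ntx*Nrx
  have hBli : ∀ s : Finset (Fin V), s.card = Ntx * Nrx →
      LinearIndependent ℂ (fun j : s => (khatriRao (S * Atx) Arx).transpose (j : Fin V)) := by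
    intro s hs
    have := (hMli s hs).map' L.mulVecLin (LinearMap.ker_eq_bot.mpr hLinj)
    convert this using 1
    funext j
    exact hcol j
    all_goals rfl
  -- upper bound: any member of the krank set is at most Ntx*Nrx
  have hub : ∀ r ∈ {r : ℕ | r ≤ Fintype.card (Fin V) ∧
      ∀ s : Finset (Fin V), s.card = r →
        LinearIndependent ℂ (fun j : s => (khatriRao (S * Atx) Arx).transpose (j : Fin V))},
      r ≤ Ntx * Nrx := by
    intro r hr
    obtain ⟨hr1, hr2⟩ := hr
    rw [Fintype.card_fin] at hr1
    obtain ⟨s, _, hs⟩ := Finset.exists_subset_card_eq (s := (Finset.univ : Finset (Fin V))) (n := r)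
      (by simpa using hr1)
    have hli := hr2 s hs
    have hli' : LinearIndependent ℂ (fun j : s => M.transpose (j : Fin V)) := by
      apply LinearIndependent.of_comp L.mulVecLin
      convert hli using 1
      funext j
      exact (hcol j).symm
      all_goals rfl
    have hcard := hli'.fintype_card_le_finrank
    rw [Module.finrank_fintype_fun_eq_card, Fintype.card_prod, Fintype.card_fin,
      Fintype.card_fin, Fintype.card_coe, hs] at hcard
    exact hcard
  -- membership of Ntx*Nrx
  have hmem : Ntx * Nrx ∈ {r : ℕ | r ≤ Fintype.card (Fin V) ∧
      ∀ s : Finset (Fin V), s.card = r →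
        LinearIndependent ℂ (fun j : s => (khatriRao (S * Atx) Arx).transpose (j : Fin V))} := by
    exact ⟨by simpa using hV, hBli⟩
  unfold krank
  apply le_antisymm
  · exact csSup_le ⟨Ntx * Nrx, hmem⟩ hub
  · exact le_csSup ⟨Ntx * Nrx, hub⟩ hmem
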